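/- Let W ∈ L³(ℝ³), α₀ ∈ L¹∩L^∞(ℝ³) nonnegative, and ξ̃ ∈ L²(ℝ³×ℝ³). Define G(X) = h⁻¹ ∫ α₀(r/h) (W(X+r/2) + W(X−r/2)) ξ̃(X,r) dr. Then ‖G‖_{L^{6/5}(ℝ³)} ≤ C h^{1/2} ‖W‖₃ ‖ξ̃‖₂ for a constant C depending only on ‖α₀‖₁ and ‖α₀‖_∞. -/

import Mathlib

open MeasureTheory Complex

noncomputable section

abbrev E3 : Type := EuclideanSpace ℝ (Fin 3)

/-- The `L^p` norm (real exponent `p`) of a complex-valued function on `ℝ³`. -/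
def LpNorm (p : ℝ) (G : E3 → ℂ) : ℝ := (∫ X : E3, ‖G X‖ ^ p) ^ p⁻¹

open scoped ENNReal NNReal

namespace PXE

lemma meas_shear (c : ℝ) : Measurable (fun p : E3 × E3 => p.1 + c • p.2) :=
  measurable_fst.add (measurable_snd.const_smul c)

lemma qmp_shear {c : ℝ} (hc : c ≠ 0) :
    Measure.QuasiMeasurePreserving (fun p : E3 × E3 => p.1 + c • p.2)
      (volume : Measure (E3 × E3)) (volume : Measure E3) := by
  refine ⟨meas_shear c, Measure.AbsolutelyContinuous.mk fun s hs h0 => ?_⟩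
  rw [Measure.map_apply (meas_shear c) hs]
  have hmeas : MeasurableSet ((fun p : E3 × E3 => p.1 + c • p.2) ⁻¹' s) := meas_shear c hs
  rw [show (volume : Measure (E3 × E3)) = (volume : Measure E3).prod volume from rfl,
    Measure.prod_apply hmeas]
  have hz : ∀ X : E3,
      (volume : Measure E3) (Prod.mk X ⁻¹' ((fun p : E3 × E3 => p.1 + c • p.2) ⁻¹' s)) = 0 := by
    intro X
    have h1 : (Prod.mk X ⁻¹' ((fun p : E3 × E3 => p.1 + c • p.2) ⁻¹' s))
        = (fun r : E3 => c • r) ⁻¹' ((fun y => X + y) ⁻¹' s) := rfl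
    rw [h1, Measure.addHaar_preimage_smul _ hc, measure_preimage_add, h0, mul_zero]
  simp [hz]

lemma lintegral_scale (g : E3 → ℝ≥0∞) (hg : Measurable g) {h : ℝ} (hh : 0 < h) :
    (∫⁻ r : E3, g (h⁻¹ • r)) = ENNReal.ofReal (h ^ 3) * ∫⁻ y, g y := by
  have hc : (h⁻¹ : ℝ) ≠ 0 := inv_ne_zero hh.ne'
  have := lintegral_map (μ := (volume : Measure E3)) hg (measurable_const_smul (h⁻¹ : ℝ))
  rw [Measure.map_addHaar_smul _ hc, lintegral_smul_measure, finrank_euclideanSpace_fin] at this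
  rw [← this]
  congr 1
  rw [← inv_pow, inv_inv, _root_.abs_of_nonneg (by positivity : (0:ℝ) ≤ h ^ 3)]

lemma cube_add (x y : ℝ≥0∞) : (x + y) ^ (3:ℝ) ≤ 8 * (x ^ (3:ℝ) + y ^ (3:ℝ)) := by
  have h8 : ((2:ℝ≥0∞)) ^ (3:ℝ) = 8 := by
    rw [show (3:ℝ) = ((3:ℕ):ℝ) by norm_num, ENNReal.rpow_natCast]; norm_num
  rcases le_total x y with hxy | hxy
  · calc (x + y) ^ (3:ℝ) ≤ (2 * y) ^ (3:ℝ) := by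
          apply ENNReal.rpow_le_rpow _ (by norm_num)
          rw [two_mul]; exact add_le_add_left hxy y
      _ = 8 * y ^ (3:ℝ) := by rw [ENNReal.mul_rpow_of_nonneg _ _ (by norm_num : (0:ℝ) ≤ 3), h8]
      _ ≤ 8 * (x ^ (3:ℝ) + y ^ (3:ℝ)) := by
          exact mul_le_mul_right le_add_self 8
  · calc (x + y) ^ (3:ℝ) ≤ (2 * x) ^ (3:ℝ) := by
          apply ENNReal.rpow_le_rpow _ (by norm_num)
          rw [two_mul]; exact add_le_add_right hxy x
      _ = 8 * x ^ (3:ℝ) := by rw [ENNReal.mul_rpow_of_nonneg _ _ (by norm_num : (0:ℝ) ≤ 3), h8]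
      _ ≤ 8 * (x ^ (3:ℝ) + y ^ (3:ℝ)) := by
          exact mul_le_mul_right le_self_add 8


lemma core {h : ℝ} (hh : 0 < h) (a V : E3 → ℝ) (Ξ : E3 × E3 → ℂ)
    (ha : Measurable a) (hV : Measurable V) (hΞ : Measurable Ξ)
    {M : ℝ} (haM : ∀ᵐ r : E3, (‖a r‖₊ : ℝ≥0∞) ≤ ENNReal.ofReal M) :
    (∫⁻ X : E3, (‖(h:ℂ)⁻¹ * ∫ r : E3, ((a (h⁻¹ • r) : ℝ) : ℂ)
        * ((V (X + (2:ℝ)⁻¹ • r) + V (X - (2:ℝ)⁻¹ • r) : ℝ) : ℂ) * Ξ (X, r)‖₊ : ℝ≥0∞) ^ ((6:ℝ)/5))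
      ≤ ENNReal.ofReal h ^ ((3:ℝ)/5)
        * ((∫⁻ r, (‖a r‖₊ : ℝ≥0∞)) ^ ((1:ℝ)/5)
          * (ENNReal.ofReal M ^ ((3:ℝ)/2) * 16 * (∫⁻ r, (‖a r‖₊ : ℝ≥0∞))) ^ ((2:ℝ)/5))
        * (∫⁻ X, (‖V X‖₊ : ℝ≥0∞) ^ (3:ℝ)) ^ ((2:ℝ)/5)
        * (∫⁻ p, (‖Ξ p‖₊ : ℝ≥0∞) ^ (2:ℝ)
            ∂((volume : Measure E3).prod volume)) ^ ((3:ℝ)/5) := by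
  set c : ℝ≥0∞ := ENNReal.ofReal h with hcdef
  have hc0 : c ≠ 0 := (ENNReal.ofReal_pos.mpr hh).ne'
  have hctop : c ≠ ∞ := ENNReal.ofReal_ne_top
  set M' : ℝ≥0∞ := ENNReal.ofReal M with hM'def
  set A : E3 → ℝ≥0∞ := fun r => (‖a (h⁻¹ • r)‖₊ : ℝ≥0∞) with hAdef
  set w : E3 × E3 → ℝ≥0∞ :=
    fun p => (‖V (p.1 + (2:ℝ)⁻¹ • p.2) + V (p.1 - (2:ℝ)⁻¹ • p.2)‖₊ : ℝ≥0∞) with hwdef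
  set wp : E3 × E3 → ℝ≥0∞ := fun p => (‖V (p.1 + (2:ℝ)⁻¹ • p.2)‖₊ : ℝ≥0∞) with hwpdef
  set wm : E3 × E3 → ℝ≥0∞ := fun p => (‖V (p.1 - (2:ℝ)⁻¹ • p.2)‖₊ : ℝ≥0∞) with hwmdef
  set z : E3 × E3 → ℝ≥0∞ := fun p => (‖Ξ p‖₊ : ℝ≥0∞) with hzdef
  have hAm : Measurable A := ((ha.comp (measurable_const_smul _)).nnnorm).coe_nnreal_ennreal
  have hVp : Measurable (fun p : E3 × E3 => V (p.1 + (2:ℝ)⁻¹ • p.2)) :=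
    hV.comp (measurable_fst.add (measurable_snd.const_smul ((2:ℝ)⁻¹)))
  have hVm : Measurable (fun p : E3 × E3 => V (p.1 - (2:ℝ)⁻¹ • p.2)) :=
    hV.comp (measurable_fst.sub (measurable_snd.const_smul ((2:ℝ)⁻¹)))
  have hwm' : Measurable w := ((hVp.add hVm).nnnorm).coe_nnreal_ennreal
  have hwpm : Measurable wp := (hVp.nnnorm).coe_nnreal_ennreal
  have hwmm : Measurable wm := (hVm.nnnorm).coe_nnreal_ennreal
  have hzm : Measurable z := (hΞ.nnnorm).coe_nnreal_ennreal
  set S : ℝ≥0∞ := ∫⁻ r, A r with hSdef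
  set I1 : ℝ≥0∞ := ∫⁻ r, (‖a r‖₊ : ℝ≥0∞) with hI1def
  set NW : ℝ≥0∞ := ∫⁻ X, (‖V X‖₊ : ℝ≥0∞) ^ (3:ℝ) with hNWdef
  set Nξ : ℝ≥0∞ := ∫⁻ p, z p ^ (2:ℝ) ∂((volume : Measure E3).prod volume) with hNξdef
  have hS : S = c ^ (3:ℝ) * I1 := by
    have := lintegral_scale (fun y => (‖a y‖₊ : ℝ≥0∞)) (ha.nnnorm.coe_nnreal_ennreal) hh
    rw [hSdef, hAdef]
    rw [this]
    congr 1
    rw [hcdef, ENNReal.ofReal_pow hh.le, ← ENNReal.rpow_natCast]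
    norm_num
  -- the product-space integrand
  set Φ : E3 × E3 → ℝ≥0∞ := fun p => A p.2 * (w p * z p) ^ ((6:ℝ)/5) with hΦdef
  have hΦm : Measurable Φ :=
    (hAm.comp measurable_snd).mul ((hwm'.mul hzm).pow_const _)
  set P : E3 → ℝ≥0∞ := fun X => ∫⁻ r, Φ (X, r) with hPdef
  have hPm : Measurable P := hΦm.lintegral_prod_right'
  -- Step 1+2+3 : pointwise bound
  have step3 : ∀ X : E3,
      (‖(h:ℂ)⁻¹ * ∫ r : E3, ((a (h⁻¹ • r) : ℝ) : ℂ)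
        * ((V (X + (2:ℝ)⁻¹ • r) + V (X - (2:ℝ)⁻¹ • r) : ℝ) : ℂ) * Ξ (X, r)‖₊ : ℝ≥0∞) ^ ((6:ℝ)/5)
      ≤ ((c ^ ((6:ℝ)/5))⁻¹ * S ^ ((1:ℝ)/5)) * P X := by
    intro X
    have step1 : (‖(h:ℂ)⁻¹ * ∫ r : E3, ((a (h⁻¹ • r) : ℝ) : ℂ)
        * ((V (X + (2:ℝ)⁻¹ • r) + V (X - (2:ℝ)⁻¹ • r) : ℝ) : ℂ) * Ξ (X, r)‖₊ : ℝ≥0∞)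
        ≤ c⁻¹ * ∫⁻ r, A r * (w (X, r) * z (X, r)) := by
      calc (‖(h:ℂ)⁻¹ * ∫ r : E3, ((a (h⁻¹ • r) : ℝ) : ℂ)
          * ((V (X + (2:ℝ)⁻¹ • r) + V (X - (2:ℝ)⁻¹ • r) : ℝ) : ℂ) * Ξ (X, r)‖₊ : ℝ≥0∞)
          = c⁻¹ * (‖∫ r : E3, ((a (h⁻¹ • r) : ℝ) : ℂ)
            * ((V (X + (2:ℝ)⁻¹ • r) + V (X - (2:ℝ)⁻¹ • r) : ℝ) : ℂ) * Ξ (X, r)‖₊ : ℝ≥0∞) := by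
            rw [nnnorm_mul, ENNReal.coe_mul]
            congr 1
            rw [← enorm_eq_nnnorm, ← ofReal_norm, ← Complex.ofReal_inv, Complex.norm_real,
              Real.norm_eq_abs, _root_.abs_of_nonneg (inv_nonneg.mpr hh.le),
              ENNReal.ofReal_inv_of_pos hh]
        _ ≤ c⁻¹ * ∫⁻ r, (‖((a (h⁻¹ • r) : ℝ) : ℂ)
            * ((V (X + (2:ℝ)⁻¹ • r) + V (X - (2:ℝ)⁻¹ • r) : ℝ) : ℂ) * Ξ (X, r)‖₊ : ℝ≥0∞) :=
            mul_le_mul_right (enorm_integral_le_lintegral_enorm _) _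
        _ = c⁻¹ * ∫⁻ r, A r * (w (X, r) * z (X, r)) := by
            congr 1
            refine lintegral_congr fun r => ?_
            rw [nnnorm_mul, nnnorm_mul, ENNReal.coe_mul, ENNReal.coe_mul,
              Complex.nnnorm_real, Complex.nnnorm_real, mul_assoc]
    have hconj : Real.HolderConjugate (6/5) 6 := ⟨by norm_num, by norm_num, by norm_num⟩
    have hf : AEMeasurable (fun r => A r ^ ((5:ℝ)/6) * (w (X, r) * z (X, r)))
        (volume : Measure E3) := by
      exact ((hAm.pow_const _).mul (((hwm'.comp measurable_prodMk_left).mul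
        (hzm.comp measurable_prodMk_left)))).aemeasurable
    have hg : AEMeasurable (fun r => A r ^ ((1:ℝ)/6)) (volume : Measure E3) :=
      (hAm.pow_const _).aemeasurable
    have key := ENNReal.lintegral_mul_le_Lp_mul_Lq (volume : Measure E3) hconj hf hg
    have lhs_eq : (∫⁻ r, ((fun r => A r ^ ((5:ℝ)/6) * (w (X, r) * z (X, r)))
        * fun r => A r ^ ((1:ℝ)/6)) r)
        = ∫⁻ r, A r * (w (X, r) * z (X, r)) := by
      refine lintegral_congr fun r => ?_
      have h1 : A r ^ ((5:ℝ)/6) * A r ^ ((1:ℝ)/6) = A r := by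
        rw [← ENNReal.rpow_add_of_nonneg _ _ (by norm_num) (by norm_num)]
        norm_num
      calc A r ^ ((5:ℝ)/6) * (w (X, r) * z (X, r)) * A r ^ ((1:ℝ)/6)
          = A r ^ ((5:ℝ)/6) * A r ^ ((1:ℝ)/6) * (w (X, r) * z (X, r)) := by ring
        _ = A r * (w (X, r) * z (X, r)) := by rw [h1]
    have rhs_f : (∫⁻ r, (A r ^ ((5:ℝ)/6) * (w (X, r) * z (X, r))) ^ ((6:ℝ)/5))
        = P X := by
      refine lintegral_congr fun r => ?_
      rw [ENNReal.mul_rpow_of_nonneg _ _ (by norm_num : (0:ℝ) ≤ 6/5), ← ENNReal.rpow_mul]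
      norm_num
      rfl
    have rhs_g : (∫⁻ r, (A r ^ ((1:ℝ)/6)) ^ (6:ℝ)) = S := by
      refine lintegral_congr fun r => ?_
      rw [← ENNReal.rpow_mul]
      norm_num
    rw [lhs_eq] at key
    have key2 : (∫⁻ r, A r * (w (X, r) * z (X, r)))
        ≤ P X ^ ((5:ℝ)/6) * S ^ ((1:ℝ)/6) := by
      refine key.trans (le_of_eq ?_)
      rw [show (1 / (6/5) : ℝ) = 5/6 by norm_num, show (1/6 : ℝ) = (1:ℝ)/6 by norm_num]
      rw [← rhs_f, ← rhs_g]
    calc (‖(h:ℂ)⁻¹ * ∫ r : E3, ((a (h⁻¹ • r) : ℝ) : ℂ)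
          * ((V (X + (2:ℝ)⁻¹ • r) + V (X - (2:ℝ)⁻¹ • r) : ℝ) : ℂ) * Ξ (X, r)‖₊ : ℝ≥0∞)
          ^ ((6:ℝ)/5)
        ≤ (c⁻¹ * (P X ^ ((5:ℝ)/6) * S ^ ((1:ℝ)/6))) ^ ((6:ℝ)/5) :=
          ENNReal.rpow_le_rpow (step1.trans (mul_le_mul_right key2 _)) (by norm_num)
      _ = ((c ^ ((6:ℝ)/5))⁻¹ * S ^ ((1:ℝ)/5)) * P X := by
          rw [ENNReal.mul_rpow_of_nonneg _ _ (by norm_num : (0:ℝ) ≤ 6/5),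
            ENNReal.mul_rpow_of_nonneg _ _ (by norm_num : (0:ℝ) ≤ 6/5),
            ← ENNReal.rpow_mul, ← ENNReal.rpow_mul, ENNReal.inv_rpow]
          rw [show ((5:ℝ)/6 * (6/5)) = 1 by norm_num, show ((1:ℝ)/6 * (6/5)) = 1/5 by norm_num,
            ENNReal.rpow_one]
          ring
  -- Step 4 : integrate in X
  have step4 : (∫⁻ X : E3, (‖(h:ℂ)⁻¹ * ∫ r : E3, ((a (h⁻¹ • r) : ℝ) : ℂ)
        * ((V (X + (2:ℝ)⁻¹ • r) + V (X - (2:ℝ)⁻¹ • r) : ℝ) : ℂ) * Ξ (X, r)‖₊ : ℝ≥0∞)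
          ^ ((6:ℝ)/5))
      ≤ ((c ^ ((6:ℝ)/5))⁻¹ * S ^ ((1:ℝ)/5))
        * ∫⁻ p, Φ p ∂((volume : Measure E3).prod volume) := by
    calc (∫⁻ X : E3, (‖(h:ℂ)⁻¹ * ∫ r : E3, ((a (h⁻¹ • r) : ℝ) : ℂ)
          * ((V (X + (2:ℝ)⁻¹ • r) + V (X - (2:ℝ)⁻¹ • r) : ℝ) : ℂ) * Ξ (X, r)‖₊ : ℝ≥0∞)
            ^ ((6:ℝ)/5))
        ≤ ∫⁻ X, ((c ^ ((6:ℝ)/5))⁻¹ * S ^ ((1:ℝ)/5)) * P X := lintegral_mono step3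
      _ = ((c ^ ((6:ℝ)/5))⁻¹ * S ^ ((1:ℝ)/5)) * ∫⁻ X, P X :=
          lintegral_const_mul _ hPm
      _ = ((c ^ ((6:ℝ)/5))⁻¹ * S ^ ((1:ℝ)/5))
          * ∫⁻ p, Φ p ∂((volume : Measure E3).prod volume) := by
          rw [lintegral_prod _ hΦm.aemeasurable]
  -- Step 5 : Hoelder on the product space
  have hconj2 : Real.HolderConjugate (5/2) (5/3) := ⟨by norm_num, by norm_num, by norm_num⟩
  set T : ℝ≥0∞ := ∫⁻ p, A p.2 ^ ((5:ℝ)/2) * w p ^ (3:ℝ)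
      ∂((volume : Measure E3).prod volume) with hTdef
  have step5 : (∫⁻ p, Φ p ∂((volume : Measure E3).prod volume))
      ≤ T ^ ((2:ℝ)/5) * Nξ ^ ((3:ℝ)/5) := by
    have hf2 : AEMeasurable (fun p : E3 × E3 => A p.2 * w p ^ ((6:ℝ)/5))
        ((volume : Measure E3).prod volume) :=
      ((hAm.comp measurable_snd).mul (hwm'.pow_const _)).aemeasurable
    have hg2 : AEMeasurable (fun p : E3 × E3 => z p ^ ((6:ℝ)/5))
        ((volume : Measure E3).prod volume) := (hzm.pow_const _).aemeasurable
    have key := ENNReal.lintegral_mul_le_Lp_mul_Lq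
      ((volume : Measure E3).prod volume) hconj2 hf2 hg2
    have lhs_eq : (∫⁻ p, ((fun p : E3 × E3 => A p.2 * w p ^ ((6:ℝ)/5))
        * fun p => z p ^ ((6:ℝ)/5)) p ∂((volume : Measure E3).prod volume))
        = ∫⁻ p, Φ p ∂((volume : Measure E3).prod volume) := by
      refine lintegral_congr fun p => ?_
      simp only [Pi.mul_apply, hΦdef]
      rw [ENNReal.mul_rpow_of_nonneg _ _ (by norm_num : (0:ℝ) ≤ 6/5)]
      ring
    have rhs_f : (∫⁻ p, (A p.2 * w p ^ ((6:ℝ)/5)) ^ ((5:ℝ)/2)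
        ∂((volume : Measure E3).prod volume)) = T := by
      refine lintegral_congr fun p => ?_
      rw [ENNReal.mul_rpow_of_nonneg _ _ (by norm_num : (0:ℝ) ≤ 5/2), ← ENNReal.rpow_mul]
      norm_num
    have rhs_g : (∫⁻ p, (z p ^ ((6:ℝ)/5)) ^ ((5:ℝ)/3)
        ∂((volume : Measure E3).prod volume)) = Nξ := by
      refine lintegral_congr fun p => ?_
      rw [← ENNReal.rpow_mul]
      norm_num
    rw [lhs_eq] at key
    refine key.trans (le_of_eq ?_)
    rw [show (1 / (5/2) : ℝ) = 2/5 by norm_num, show (1 / (5/3) : ℝ) = 3/5 by norm_num,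
      ← rhs_f, ← rhs_g]
  -- Step 6 : bound T
  have qmp2 : Measure.QuasiMeasurePreserving (fun p : E3 × E3 => (h⁻¹ : ℝ) • p.2)
      ((volume : Measure E3).prod volume) (volume : Measure E3) :=
    (Measure.quasiMeasurePreserving_smul volume (inv_ne_zero hh.ne')).comp
      Measure.quasiMeasurePreserving_snd
  have hAM : ∀ᵐ p : E3 × E3 ∂((volume : Measure E3).prod volume), A p.2 ≤ M' := qmp2.ae haM
  have step6 : T ≤ M' ^ ((3:ℝ)/2) * ∫⁻ p, A p.2 * w p ^ (3:ℝ)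
      ∂((volume : Measure E3).prod volume) := by
    have hpt : ∀ᵐ p : E3 × E3 ∂((volume : Measure E3).prod volume),
        A p.2 ^ ((5:ℝ)/2) * w p ^ (3:ℝ)
          ≤ M' ^ ((3:ℝ)/2) * (A p.2 * w p ^ (3:ℝ)) := by
      filter_upwards [hAM] with p hp
      have h1 : A p.2 ^ ((5:ℝ)/2) = A p.2 ^ ((3:ℝ)/2) * A p.2 := by
        rw [show ((5:ℝ)/2) = (3:ℝ)/2 + 1 by norm_num,
          ENNReal.rpow_add_of_nonneg _ _ (by norm_num) (by norm_num), ENNReal.rpow_one]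
      rw [h1, mul_assoc]
      exact mul_le_mul_left (ENNReal.rpow_le_rpow hp (by norm_num)) _
    calc T ≤ ∫⁻ p, M' ^ ((3:ℝ)/2) * (A p.2 * w p ^ (3:ℝ))
          ∂((volume : Measure E3).prod volume) := lintegral_mono_ae hpt
      _ = M' ^ ((3:ℝ)/2) * ∫⁻ p, A p.2 * w p ^ (3:ℝ)
          ∂((volume : Measure E3).prod volume) :=
          lintegral_const_mul _ ((hAm.comp measurable_snd).mul (hwm'.pow_const _))
  -- Step 7 : translation invariance
  have hplus : (∫⁻ p, A p.2 * wp p ^ (3:ℝ) ∂((volume : Measure E3).prod volume))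
      = S * NW := by
    rw [lintegral_prod_symm (fun p : E3 × E3 => A p.2 * wp p ^ (3:ℝ))
      (by exact ((hAm.comp measurable_snd).mul (hwpm.pow_const _)).aemeasurable)]
    have inner : ∀ r : E3, (∫⁻ X, A r * wp (X, r) ^ (3:ℝ)) = A r * NW := by
      intro r
      rw [lintegral_const_mul' _ _ ENNReal.coe_ne_top]
      congr 1
      exact lintegral_add_right_eq_self (fun Y => (‖V Y‖₊ : ℝ≥0∞) ^ (3:ℝ)) ((2:ℝ)⁻¹ • r)
    calc (∫⁻ r, ∫⁻ X, A r * wp (X, r) ^ (3:ℝ)) = ∫⁻ r, A r * NW :=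
          lintegral_congr inner
      _ = S * NW := lintegral_mul_const _ hAm
  have hminus : (∫⁻ p, A p.2 * wm p ^ (3:ℝ) ∂((volume : Measure E3).prod volume))
      = S * NW := by
    rw [lintegral_prod_symm (fun p : E3 × E3 => A p.2 * wm p ^ (3:ℝ))
      (by exact ((hAm.comp measurable_snd).mul (hwmm.pow_const _)).aemeasurable)]
    have inner : ∀ r : E3, (∫⁻ X, A r * wm (X, r) ^ (3:ℝ)) = A r * NW := by
      intro r
      rw [lintegral_const_mul' _ _ ENNReal.coe_ne_top]
      congr 1
      have : ∀ X : E3, wm (X, r) = (‖V (X + -((2:ℝ)⁻¹ • r))‖₊ : ℝ≥0∞) := by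
        intro X; rw [hwmdef]; simp [sub_eq_add_neg]
      calc (∫⁻ X, wm (X, r) ^ (3:ℝ))
          = ∫⁻ X, (‖V (X + -((2:ℝ)⁻¹ • r))‖₊ : ℝ≥0∞) ^ (3:ℝ) := by
            exact lintegral_congr fun X => by rw [this X]
        _ = NW := lintegral_add_right_eq_self (fun Y => (‖V Y‖₊ : ℝ≥0∞) ^ (3:ℝ)) _
    calc (∫⁻ r, ∫⁻ X, A r * wm (X, r) ^ (3:ℝ)) = ∫⁻ r, A r * NW :=
          lintegral_congr inner
      _ = S * NW := lintegral_mul_const _ hAm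
  have step7 : (∫⁻ p, A p.2 * w p ^ (3:ℝ) ∂((volume : Measure E3).prod volume))
      ≤ 16 * (S * NW) := by
    have hpt : ∀ p : E3 × E3, A p.2 * w p ^ (3:ℝ)
        ≤ 8 * (A p.2 * wp p ^ (3:ℝ)) + 8 * (A p.2 * wm p ^ (3:ℝ)) := by
      intro p
      have hle : w p ≤ wp p + wm p := by
        show (‖V (p.1 + (2:ℝ)⁻¹ • p.2) + V (p.1 - (2:ℝ)⁻¹ • p.2)‖₊ : ℝ≥0∞)
          ≤ (‖V (p.1 + (2:ℝ)⁻¹ • p.2)‖₊ : ℝ≥0∞) + (‖V (p.1 - (2:ℝ)⁻¹ • p.2)‖₊ : ℝ≥0∞)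
        exact_mod_cast nnnorm_add_le _ _
      have h3 : w p ^ (3:ℝ) ≤ 8 * (wp p ^ (3:ℝ) + wm p ^ (3:ℝ)) :=
        (ENNReal.rpow_le_rpow hle (by norm_num)).trans (cube_add _ _)
      calc A p.2 * w p ^ (3:ℝ) ≤ A p.2 * (8 * (wp p ^ (3:ℝ) + wm p ^ (3:ℝ))) :=
            mul_le_mul_right h3 _
        _ = 8 * (A p.2 * wp p ^ (3:ℝ)) + 8 * (A p.2 * wm p ^ (3:ℝ)) := by ring
    calc (∫⁻ p, A p.2 * w p ^ (3:ℝ) ∂((volume : Measure E3).prod volume))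
        ≤ ∫⁻ p, (8 * (A p.2 * wp p ^ (3:ℝ)) + 8 * (A p.2 * wm p ^ (3:ℝ)))
            ∂((volume : Measure E3).prod volume) := lintegral_mono hpt
      _ = 8 * (S * NW) + 8 * (S * NW) := by
          rw [lintegral_add_left (f := fun p : E3 × E3 => 8 * (A p.2 * wp p ^ (3:ℝ)))
            (by exact ((hAm.comp measurable_snd).mul (hwpm.pow_const _)).const_mul 8)]
          rw [lintegral_const_mul' _ _ (by norm_num : (8:ℝ≥0∞) ≠ ∞),
            lintegral_const_mul' _ _ (by norm_num : (8:ℝ≥0∞) ≠ ∞), hplus, hminus]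
      _ = 16 * (S * NW) := by ring
  -- assemble
  have chain : (∫⁻ X : E3, (‖(h:ℂ)⁻¹ * ∫ r : E3, ((a (h⁻¹ • r) : ℝ) : ℂ)
        * ((V (X + (2:ℝ)⁻¹ • r) + V (X - (2:ℝ)⁻¹ • r) : ℝ) : ℂ) * Ξ (X, r)‖₊ : ℝ≥0∞)
          ^ ((6:ℝ)/5))
      ≤ ((c ^ ((6:ℝ)/5))⁻¹ * S ^ ((1:ℝ)/5))
        * ((M' ^ ((3:ℝ)/2) * (16 * (S * NW))) ^ ((2:ℝ)/5) * Nξ ^ ((3:ℝ)/5)) := by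
    refine step4.trans ?_
    refine mul_le_mul_right (step5.trans ?_) _
    refine mul_le_mul_left (ENNReal.rpow_le_rpow ?_ (by norm_num)) _
    exact step6.trans (mul_le_mul_right step7 _)
  refine chain.trans (le_of_eq ?_)
  -- now pure computation
  have hS1 : S ^ ((1:ℝ)/5) = c ^ ((3:ℝ)/5) * I1 ^ ((1:ℝ)/5) := by
    rw [hS, ENNReal.mul_rpow_of_nonneg _ _ (by norm_num : (0:ℝ) ≤ 1/5), ← ENNReal.rpow_mul,
      show ((3:ℝ) * (1/5)) = 3/5 by norm_num]
  have hS2 : (M' ^ ((3:ℝ)/2) * (16 * (S * NW))) ^ ((2:ℝ)/5)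
      = (M' ^ ((3:ℝ)/2) * 16 * I1) ^ ((2:ℝ)/5) * (c ^ ((6:ℝ)/5) * NW ^ ((2:ℝ)/5)) := by
    have : M' ^ ((3:ℝ)/2) * (16 * (S * NW)) = (M' ^ ((3:ℝ)/2) * 16 * I1) * c ^ (3:ℝ) * NW := by
      rw [hS]; ring
    rw [this, ENNReal.mul_rpow_of_nonneg _ _ (by norm_num : (0:ℝ) ≤ 2/5),
      ENNReal.mul_rpow_of_nonneg _ _ (by norm_num : (0:ℝ) ≤ 2/5), ← ENNReal.rpow_mul,
      show ((3:ℝ) * (2/5)) = 6/5 by norm_num]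
    ring
  rw [hS1, hS2]
  have hcc : (c ^ ((6:ℝ)/5))⁻¹ * c ^ ((6:ℝ)/5) = 1 :=
    ENNReal.inv_mul_cancel (by
      exact (ENNReal.rpow_pos (ENNReal.ofReal_pos.mpr hh) hctop).ne')
      (ENNReal.rpow_ne_top_of_nonneg (by norm_num) hctop)
  calc (c ^ ((6:ℝ)/5))⁻¹ * (c ^ ((3:ℝ)/5) * I1 ^ ((1:ℝ)/5))
        * ((M' ^ ((3:ℝ)/2) * 16 * I1) ^ ((2:ℝ)/5) * (c ^ ((6:ℝ)/5) * NW ^ ((2:ℝ)/5))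
          * Nξ ^ ((3:ℝ)/5))
      = ((c ^ ((6:ℝ)/5))⁻¹ * c ^ ((6:ℝ)/5)) * (c ^ ((3:ℝ)/5)
        * (I1 ^ ((1:ℝ)/5) * (M' ^ ((3:ℝ)/2) * 16 * I1) ^ ((2:ℝ)/5))
        * NW ^ ((2:ℝ)/5) * Nξ ^ ((3:ℝ)/5)) := by ring
    _ = c ^ ((3:ℝ)/5) * (I1 ^ ((1:ℝ)/5) * (M' ^ ((3:ℝ)/2) * 16 * I1) ^ ((2:ℝ)/5))
        * NW ^ ((2:ℝ)/5) * Nξ ^ ((3:ℝ)/5) := by rw [hcc, one_mul]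

end PXE

/-- for `W ∈ L³(ℝ³)`, `α₀ ∈ L¹∩L^∞` nonnegative and `ξ̃ ∈ L²(ℝ³×ℝ³)`, the
function `G(X) = h⁻¹ ∫ α₀(r/h)(W(X+r/2)+W(X−r/2)) ξ̃(X,r) dr` satisfies
`‖G‖_{6/5} ≤ C h^{1/2} ‖W‖₃ ‖ξ̃‖₂`, with `C` depending only on `‖α₀‖₁` and `‖α₀‖_∞`. -/
theorem potential_xi_error_bound
    (α₀ : E3 → ℝ) (hα₀pos : ∀ r, 0 ≤ α₀ r)
    (hα₀L1 : Integrable α₀) (hα₀bdd : ∃ M, ∀ r, α₀ r ≤ M) :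
    ∃ C : ℝ, 0 < C ∧
      ∀ (h : ℝ), 0 < h → h ≤ 1 →
      ∀ (W : E3 → ℝ), MemLp W 3 (volume : Measure E3) →
      ∀ (ξ : E3 × E3 → ℂ), MemLp ξ 2 (volume : Measure (E3 × E3)) →
      LpNorm (6/5)
          (fun X => (h : ℂ)⁻¹ * ∫ r : E3,
            ((α₀ (h⁻¹ • r) : ℝ) : ℂ)
              * ((W (X + (2:ℝ)⁻¹ • r) + W (X - (2:ℝ)⁻¹ • r) : ℝ) : ℂ) * ξ (X, r))
        ≤ C * h ^ ((1:ℝ)/2) * LpNorm 3 (fun X => ((W X : ℝ) : ℂ))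
            * Real.sqrt (∫ p : E3 × E3, ‖ξ p‖ ^ 2) := by

  obtain ⟨M, hM⟩ := hα₀bdd
  have hM0 : 0 ≤ M := le_trans (hα₀pos 0) (hM 0)
  set a : E3 → ℝ := hα₀L1.1.mk α₀ with hadef
  have ham : StronglyMeasurable a := hα₀L1.1.stronglyMeasurable_mk
  have haeq : α₀ =ᵐ[(volume : Measure E3)] a := hα₀L1.1.ae_eq_mk
  set I1 : ℝ≥0∞ := ∫⁻ r, (‖a r‖₊ : ℝ≥0∞) with hI1def
  have hI1top : I1 ≠ ∞ := by
    have h2 : (∫⁻ r, (‖α₀ r‖₊ : ℝ≥0∞)) < ∞ := hα₀L1.2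
    have heq : (∫⁻ r, (‖α₀ r‖₊ : ℝ≥0∞)) = I1 := by
      refine lintegral_congr_ae ?_
      filter_upwards [haeq] with r hr
      rw [hr]
    rw [heq] at h2
    exact h2.ne
  have haM : ∀ᵐ r : E3, (‖a r‖₊ : ℝ≥0∞) ≤ ENNReal.ofReal M := by
    filter_upwards [haeq] with r hr
    rw [← hr, ← enorm_eq_nnnorm, ← ofReal_norm, Real.norm_eq_abs,
      _root_.abs_of_nonneg (hα₀pos r)]
    exact ENNReal.ofReal_le_ofReal (hM r)
  set Kc : ℝ≥0∞ := I1 ^ ((1:ℝ)/5)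
      * (ENNReal.ofReal M ^ ((3:ℝ)/2) * 16 * I1) ^ ((2:ℝ)/5) with hKcdef
  have hKctop : Kc ≠ ∞ := by
    refine ENNReal.mul_ne_top (ENNReal.rpow_lt_top_of_nonneg (by norm_num) hI1top).ne
      (ENNReal.rpow_lt_top_of_nonneg (by norm_num) ?_).ne
    exact ENNReal.mul_ne_top (ENNReal.mul_ne_top
      (ENNReal.rpow_lt_top_of_nonneg (by norm_num) ENNReal.ofReal_ne_top).ne
      (by norm_num)) hI1top
  refine ⟨Kc.toReal ^ ((5:ℝ)/6) + 1, by positivity, ?_⟩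
  intro h hh _ W hW ξ hξ
  set V : E3 → ℝ := hW.1.mk W with hVdef
  have hVm : StronglyMeasurable V := hW.1.stronglyMeasurable_mk
  have hWeq : W =ᵐ[(volume : Measure E3)] V := hW.1.ae_eq_mk
  set Ξ : E3 × E3 → ℂ := hξ.1.mk ξ with hΞdef
  have hΞm : StronglyMeasurable Ξ := hξ.1.stronglyMeasurable_mk
  have hξeq : ξ =ᵐ[(volume : Measure (E3 × E3))] Ξ := hξ.1.ae_eq_mk
  -- finiteness of the L³ and L² integrals
  set NW : ℝ≥0∞ := ∫⁻ X, (‖V X‖₊ : ℝ≥0∞) ^ (3:ℝ) with hNWdef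
  have hNWW : (∫⁻ X, (‖W X‖₊ : ℝ≥0∞) ^ (3:ℝ)) = NW := by
    refine lintegral_congr_ae ?_
    filter_upwards [hWeq] with X hX
    rw [hX]
  have hNWtop : NW ≠ ∞ := by
    have h2 := hW.2
    rw [eLpNorm_eq_lintegral_rpow_enorm_toReal (by norm_num) (by norm_num)] at h2
    simp only [enorm_eq_nnnorm] at h2
    have h3 : ((3:ℝ≥0∞)).toReal = (3:ℝ) := by norm_num
    rw [h3] at h2
    have h4 : (∫⁻ X, (‖W X‖₊ : ℝ≥0∞) ^ (3:ℝ)) < ∞ := by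
      by_contra hcon
      push_neg at hcon
      have := top_le_iff.mp hcon
      rw [this] at h2
      simp [ENNReal.top_rpow_of_pos (by norm_num : (0:ℝ) < 1/3)] at h2
    rw [hNWW] at h4
    exact h4.ne
  set Nξ : ℝ≥0∞ := ∫⁻ p, (‖Ξ p‖₊ : ℝ≥0∞) ^ (2:ℝ)
      ∂((volume : Measure E3).prod volume) with hNξdef
  have hNξξ : (∫⁻ p, (‖ξ p‖₊ : ℝ≥0∞) ^ (2:ℝ) ∂(volume : Measure (E3 × E3))) = Nξ := by
    rw [Measure.volume_eq_prod]
    refine lintegral_congr_ae ?_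
    have hξeq' : ξ =ᵐ[((volume : Measure E3).prod volume)] Ξ := by
      rw [← Measure.volume_eq_prod]; exact hξeq
    filter_upwards [hξeq'] with p hp
    rw [hp]
  have hNξtop : Nξ ≠ ∞ := by
    have h2 := hξ.2
    rw [eLpNorm_eq_lintegral_rpow_enorm_toReal (by norm_num) (by norm_num)] at h2
    simp only [enorm_eq_nnnorm] at h2
    have h3 : ((2:ℝ≥0∞)).toReal = (2:ℝ) := by norm_num
    rw [h3] at h2
    have h4 : (∫⁻ p, (‖ξ p‖₊ : ℝ≥0∞) ^ (2:ℝ) ∂(volume : Measure (E3 × E3))) < ∞ := by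
      by_contra hcon
      push_neg at hcon
      have := top_le_iff.mp hcon
      rw [this] at h2
      simp [ENNReal.top_rpow_of_pos (by norm_num : (0:ℝ) < 1/2)] at h2
    rw [hNξξ] at h4
    exact h4.ne
  -- a.e. identification of the integrands
  have qmp2 : Measure.QuasiMeasurePreserving (fun p : E3 × E3 => (h⁻¹ : ℝ) • p.2)
      ((volume : Measure E3).prod volume) (volume : Measure E3) :=
    (Measure.quasiMeasurePreserving_smul volume (inv_ne_zero hh.ne')).comp
      Measure.quasiMeasurePreserving_snd
  have h1 : ∀ᵐ p : E3 × E3 ∂((volume : Measure E3).prod volume),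
      α₀ ((h⁻¹ : ℝ) • p.2) = a ((h⁻¹ : ℝ) • p.2) := qmp2.ae haeq
  have h2p : ∀ᵐ p : E3 × E3 ∂((volume : Measure E3).prod volume),
      W (p.1 + (2:ℝ)⁻¹ • p.2) = V (p.1 + (2:ℝ)⁻¹ • p.2) :=
    (PXE.qmp_shear (by norm_num : ((2:ℝ)⁻¹) ≠ 0)).ae hWeq
  have h2m : ∀ᵐ p : E3 × E3 ∂((volume : Measure E3).prod volume),
      W (p.1 - (2:ℝ)⁻¹ • p.2) = V (p.1 - (2:ℝ)⁻¹ • p.2) := by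
    have := (PXE.qmp_shear (by norm_num : (-(2:ℝ)⁻¹) ≠ 0)).ae hWeq
    filter_upwards [this] with p hp
    rw [show p.1 - (2:ℝ)⁻¹ • p.2 = p.1 + (-(2:ℝ)⁻¹) • p.2 by
      rw [neg_smul, ← sub_eq_add_neg]]
    exact hp
  have h4 : ∀ᵐ p : E3 × E3 ∂((volume : Measure E3).prod volume), ξ p = Ξ p := by
    rw [← Measure.volume_eq_prod]; exact hξeq
  have hGG' : ∀ᵐ X : E3 ∂(volume : Measure E3),
      ((h : ℂ)⁻¹ * ∫ r : E3, ((α₀ (h⁻¹ • r) : ℝ) : ℂ)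
        * ((W (X + (2:ℝ)⁻¹ • r) + W (X - (2:ℝ)⁻¹ • r) : ℝ) : ℂ) * ξ (X, r))
      = ((h : ℂ)⁻¹ * ∫ r : E3, ((a (h⁻¹ • r) : ℝ) : ℂ)
        * ((V (X + (2:ℝ)⁻¹ • r) + V (X - (2:ℝ)⁻¹ • r) : ℝ) : ℂ) * Ξ (X, r)) := by
    have hcomb : ∀ᵐ p : E3 × E3 ∂((volume : Measure E3).prod volume),
        α₀ ((h⁻¹ : ℝ) • p.2) = a ((h⁻¹ : ℝ) • p.2)
        ∧ W (p.1 + (2:ℝ)⁻¹ • p.2) = V (p.1 + (2:ℝ)⁻¹ • p.2)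
        ∧ W (p.1 - (2:ℝ)⁻¹ • p.2) = V (p.1 - (2:ℝ)⁻¹ • p.2)
        ∧ ξ p = Ξ p := by
      filter_upwards [h1, h2p, h2m, h4] with p e1 e2 e3 e4
      exact ⟨e1, e2, e3, e4⟩
    filter_upwards [Measure.ae_ae_of_ae_prod hcomb] with X hX
    congr 1
    refine integral_congr_ae ?_
    filter_upwards [hX] with r hr
    rw [hr.1, hr.2.1, hr.2.2.1, hr.2.2.2]
  -- measurability of the regularized G
  have m1 : Measurable (fun p : E3 × E3 => a ((h⁻¹ : ℝ) • p.2)) :=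
    ham.measurable.comp ((measurable_const_smul _).comp measurable_snd)
  have m2 : Measurable (fun p : E3 × E3 => V (p.1 + (2:ℝ)⁻¹ • p.2)) :=
    hVm.measurable.comp (measurable_fst.add (measurable_snd.const_smul ((2:ℝ)⁻¹)))
  have m3 : Measurable (fun p : E3 × E3 => V (p.1 - (2:ℝ)⁻¹ • p.2)) :=
    hVm.measurable.comp (measurable_fst.sub (measurable_snd.const_smul ((2:ℝ)⁻¹)))
  have mF : Measurable (fun p : E3 × E3 => ((a (h⁻¹ • p.2) : ℝ) : ℂ)
      * ((V (p.1 + (2:ℝ)⁻¹ • p.2) + V (p.1 - (2:ℝ)⁻¹ • p.2) : ℝ) : ℂ) * Ξ p) :=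
    ((Complex.measurable_ofReal.comp m1).mul
      (Complex.measurable_ofReal.comp (m2.add m3))).mul hΞm.measurable
  have hG'sm : StronglyMeasurable (fun X : E3 => (h : ℂ)⁻¹ * ∫ r : E3,
      ((a (h⁻¹ • r) : ℝ) : ℂ)
        * ((V (X + (2:ℝ)⁻¹ • r) + V (X - (2:ℝ)⁻¹ • r) : ℝ) : ℂ) * Ξ (X, r)) :=
    stronglyMeasurable_const.mul mF.stronglyMeasurable.integral_prod_right'
  -- core estimate
  have key := PXE.core hh a V Ξ ham.measurable hVm.measurable hΞm.measurable haM
  -- convert the LHS integral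
  have hint : (∫ X : E3, ‖(h : ℂ)⁻¹ * ∫ r : E3, ((α₀ (h⁻¹ • r) : ℝ) : ℂ)
        * ((W (X + (2:ℝ)⁻¹ • r) + W (X - (2:ℝ)⁻¹ • r) : ℝ) : ℂ) * ξ (X, r)‖ ^ ((6:ℝ)/5))
      = (∫⁻ X : E3, (‖(h:ℂ)⁻¹ * ∫ r : E3, ((a (h⁻¹ • r) : ℝ) : ℂ)
        * ((V (X + (2:ℝ)⁻¹ • r) + V (X - (2:ℝ)⁻¹ • r) : ℝ) : ℂ) * Ξ (X, r)‖₊ : ℝ≥0∞)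
          ^ ((6:ℝ)/5)).toReal := by
    rw [integral_congr_ae (g := fun X : E3 => ‖(h : ℂ)⁻¹ * ∫ r : E3,
        ((a (h⁻¹ • r) : ℝ) : ℂ)
        * ((V (X + (2:ℝ)⁻¹ • r) + V (X - (2:ℝ)⁻¹ • r) : ℝ) : ℂ) * Ξ (X, r)‖ ^ ((6:ℝ)/5))
      (by filter_upwards [hGG'] with X hX; rw [hX])]
    rw [integral_eq_lintegral_of_nonneg_ae
      (Filter.Eventually.of_forall fun X => Real.rpow_nonneg (norm_nonneg _) _)
      ((hG'sm.measurable.norm.pow_const _).aestronglyMeasurable)]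
    congr 1
    refine lintegral_congr fun X => ?_
    rw [← ENNReal.ofReal_rpow_of_nonneg (norm_nonneg _) (by norm_num),
      ofReal_norm, enorm_eq_nnnorm]
  -- convert the RHS quantities
  have hW3 : LpNorm 3 (fun X => ((W X : ℝ) : ℂ)) = NW.toReal ^ ((3:ℝ)⁻¹) := by
    have hWnorm : (∫ X : E3, ‖((W X : ℝ) : ℂ)‖ ^ (3:ℝ)) = NW.toReal := by
      rw [integral_congr_ae (g := fun X : E3 => ‖V X‖ ^ (3:ℝ)) (by
        filter_upwards [hWeq] with X hX
        rw [Complex.norm_real, hX])]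
      rw [integral_eq_lintegral_of_nonneg_ae
        (Filter.Eventually.of_forall fun X => Real.rpow_nonneg (norm_nonneg _) _)
        ((hVm.measurable.norm.pow_const _).aestronglyMeasurable)]
      congr 1
      refine lintegral_congr fun X => ?_
      rw [← ENNReal.ofReal_rpow_of_nonneg (norm_nonneg _) (by norm_num),
        ofReal_norm, enorm_eq_nnnorm]
    simp only [LpNorm]
    rw [hWnorm]
  have hξ2 : (∫ p : E3 × E3, ‖ξ p‖ ^ 2) = Nξ.toReal := by
    rw [integral_congr_ae (g := fun p : E3 × E3 => ‖Ξ p‖ ^ 2) (by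
      filter_upwards [hξeq] with p hp
      rw [hp])]
    rw [integral_eq_lintegral_of_nonneg_ae
      (Filter.Eventually.of_forall fun p => by positivity)
      ((hΞm.measurable.norm.pow_const _).aestronglyMeasurable)]
    rw [Measure.volume_eq_prod]
    congr 1
    refine lintegral_congr fun p => ?_
    rw [show ‖Ξ p‖ ^ 2 = ‖Ξ p‖ ^ ((2:ℕ):ℝ) from (Real.rpow_natCast _ 2).symm,
      ← ENNReal.ofReal_rpow_of_nonneg (norm_nonneg _) (by norm_num),
      ofReal_norm, enorm_eq_nnnorm]
    norm_num
  -- combine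
  have hBle : (∫⁻ X : E3, (‖(h:ℂ)⁻¹ * ∫ r : E3, ((a (h⁻¹ • r) : ℝ) : ℂ)
        * ((V (X + (2:ℝ)⁻¹ • r) + V (X - (2:ℝ)⁻¹ • r) : ℝ) : ℂ) * Ξ (X, r)‖₊ : ℝ≥0∞)
          ^ ((6:ℝ)/5)).toReal
      ≤ (ENNReal.ofReal h ^ ((3:ℝ)/5) * Kc * NW ^ ((2:ℝ)/5) * Nξ ^ ((3:ℝ)/5)).toReal := by
    refine ENNReal.toReal_mono ?_ ?_
    · exact ENNReal.mul_ne_top (ENNReal.mul_ne_top (ENNReal.mul_ne_top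
        (ENNReal.rpow_lt_top_of_nonneg (by norm_num) ENNReal.ofReal_ne_top).ne hKctop)
        (ENNReal.rpow_lt_top_of_nonneg (by norm_num) hNWtop).ne)
        (ENNReal.rpow_lt_top_of_nonneg (by norm_num) hNξtop).ne
    · exact key
  have hRHS : (ENNReal.ofReal h ^ ((3:ℝ)/5) * Kc * NW ^ ((2:ℝ)/5) * Nξ ^ ((3:ℝ)/5)).toReal
      = h ^ ((3:ℝ)/5) * Kc.toReal * NW.toReal ^ ((2:ℝ)/5) * Nξ.toReal ^ ((3:ℝ)/5) := by
    rw [ENNReal.toReal_mul, ENNReal.toReal_mul, ENNReal.toReal_mul,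
      ← ENNReal.toReal_rpow, ← ENNReal.toReal_rpow, ← ENNReal.toReal_rpow,
      ENNReal.toReal_ofReal hh.le]
  rw [hW3, hξ2, Real.sqrt_eq_rpow]
  simp only [LpNorm]
  rw [hint]
  have hnn1 : (0:ℝ) ≤ h ^ ((3:ℝ)/5) := Real.rpow_nonneg hh.le _
  have hnn2 : (0:ℝ) ≤ Kc.toReal := ENNReal.toReal_nonneg
  have hnn3 : (0:ℝ) ≤ NW.toReal ^ ((2:ℝ)/5) := Real.rpow_nonneg ENNReal.toReal_nonneg _
  calc ((∫⁻ X : E3, (‖(h:ℂ)⁻¹ * ∫ r : E3, ((a (h⁻¹ • r) : ℝ) : ℂ)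
        * ((V (X + (2:ℝ)⁻¹ • r) + V (X - (2:ℝ)⁻¹ • r) : ℝ) : ℂ) * Ξ (X, r)‖₊ : ℝ≥0∞)
          ^ ((6:ℝ)/5)).toReal) ^ ((6/5 : ℝ))⁻¹
      ≤ ((ENNReal.ofReal h ^ ((3:ℝ)/5) * Kc * NW ^ ((2:ℝ)/5)
          * Nξ ^ ((3:ℝ)/5)).toReal) ^ ((6/5 : ℝ))⁻¹ :=
        Real.rpow_le_rpow ENNReal.toReal_nonneg hBle (by norm_num)
    _ = h ^ ((1:ℝ)/2) * Kc.toReal ^ ((5:ℝ)/6) * NW.toReal ^ ((3:ℝ)⁻¹)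
        * Nξ.toReal ^ ((1:ℝ)/2) := by
        rw [hRHS, show ((6/5 : ℝ))⁻¹ = (5:ℝ)/6 by norm_num]
        rw [Real.mul_rpow (by positivity) (Real.rpow_nonneg ENNReal.toReal_nonneg _),
          Real.mul_rpow (by positivity) hnn3,
          Real.mul_rpow hnn1 hnn2,
          ← Real.rpow_mul hh.le, ← Real.rpow_mul ENNReal.toReal_nonneg,
          ← Real.rpow_mul ENNReal.toReal_nonneg]
        rw [show ((3:ℝ)/5 * (5/6)) = (1:ℝ)/2 by norm_num,
          show ((2:ℝ)/5 * (5/6)) = (3:ℝ)⁻¹ by norm_num]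
    _ ≤ (Kc.toReal ^ ((5:ℝ)/6) + 1) * h ^ ((1:ℝ)/2) * NW.toReal ^ ((3:ℝ)⁻¹)
        * Nξ.toReal ^ ((1:ℝ)/2) := by
        have hres : (0:ℝ) ≤ h ^ ((1:ℝ)/2) * NW.toReal ^ ((3:ℝ)⁻¹)
            * Nξ.toReal ^ ((1:ℝ)/2) :=
          mul_nonneg (mul_nonneg (Real.rpow_nonneg hh.le _)
            (Real.rpow_nonneg ENNReal.toReal_nonneg _))
            (Real.rpow_nonneg ENNReal.toReal_nonneg _)
        have hfac : Kc.toReal ^ ((5:ℝ)/6) ≤ Kc.toReal ^ ((5:ℝ)/6) + 1 := by linarith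
        calc h ^ ((1:ℝ)/2) * Kc.toReal ^ ((5:ℝ)/6) * NW.toReal ^ ((3:ℝ)⁻¹)
              * Nξ.toReal ^ ((1:ℝ)/2)
            = Kc.toReal ^ ((5:ℝ)/6) * (h ^ ((1:ℝ)/2) * NW.toReal ^ ((3:ℝ)⁻¹)
              * Nξ.toReal ^ ((1:ℝ)/2)) := by ring
          _ ≤ (Kc.toReal ^ ((5:ℝ)/6) + 1) * (h ^ ((1:ℝ)/2) * NW.toReal ^ ((3:ℝ)⁻¹)
              * Nξ.toReal ^ ((1:ℝ)/2)) := mul_le_mul_of_nonneg_right hfac hres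
          _ = (Kc.toReal ^ ((5:ℝ)/6) + 1) * h ^ ((1:ℝ)/2) * NW.toReal ^ ((3:ℝ)⁻¹)
              * Nξ.toReal ^ ((1:ℝ)/2) := by ring
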